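/- For every n ≥ 3, the inequality H_{n,(2,2,2)} ≥ H_{n,(3,1,1,1)} fails at the point x = (2,1,…,1) ∈ [0,∞)^n (first coordinate 2, the remaining n−1 coordinates 1): H_{n,(2,2,2)}(2,1,…,1) < H_{n,(3,1,1,1)}(2,1,…,1). Explicitly, (h_{n,2}(x))^3 / C(n+1,2)^3 < h_{n,3}(x) · (h_{n,1}(x))^3 / (C(n+2,3) · n^3) at this point. -/

import Mathlib

/-- The complete homogeneous symmetric polynomial `h_{n,k}`, as a function on `ℝ^n`:
the sum of all monomials of total degree `k` in `x 0, …, x (n-1)` (with `h_{n,0} = 1`). -/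
noncomputable def hsym (n k : ℕ) (x : Fin n → ℝ) : ℝ :=
  ∑ d ∈ Finset.Nat.antidiagonalTuple n k, ∏ i, x i ^ d i

lemma hsym_cons (n k : ℕ) (a : ℝ) (x : Fin n → ℝ) :
    hsym (n+1) k (Fin.cons a x)
      = ∑ p ∈ Finset.HasAntidiagonal.antidiagonal k, a ^ p.1 * hsym n p.2 x := by
  unfold hsym
  have key : ∑ d ∈ Finset.Nat.antidiagonalTuple (n+1) k,
        ∏ i, (Fin.cons a x : Fin (n+1) → ℝ) i ^ d i
      = ∑ pd ∈ (Finset.HasAntidiagonal.antidiagonal k).sigma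
            (fun p => Finset.Nat.antidiagonalTuple n p.2),
          a ^ pd.1.1 * ∏ i, x i ^ pd.2 i := by
    refine Finset.sum_nbij' (fun d => ⟨(d 0, ∑ i : Fin n, d i.succ), Fin.tail d⟩)
      (fun pd => Fin.cons pd.1.1 pd.2) ?_ ?_ ?_ ?_ ?_
    · intro d hd
      simp only [Finset.Nat.mem_antidiagonalTuple] at hd
      simp only [Finset.mem_sigma, Finset.HasAntidiagonal.mem_antidiagonal,
        Finset.Nat.mem_antidiagonalTuple]
      exact ⟨by rw [← hd, Fin.sum_univ_succ], by simp [Fin.tail]⟩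
    · rintro ⟨p, d⟩ hpd
      simp only [Finset.mem_sigma, Finset.HasAntidiagonal.mem_antidiagonal,
        Finset.Nat.mem_antidiagonalTuple] at hpd
      simp only [Finset.Nat.mem_antidiagonalTuple, Fin.sum_cons, hpd.2, hpd.1]
    · intro d hd
      exact Fin.cons_self_tail d
    · rintro ⟨p, d⟩ hpd
      simp only [Finset.mem_sigma, Finset.HasAntidiagonal.mem_antidiagonal,
        Finset.Nat.mem_antidiagonalTuple] at hpd
      simp [Fin.tail_cons, hpd.2, Prod.ext_iff]
    · intro d hd
      rw [Fin.prod_univ_succ]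
      simp [Fin.tail]
  rw [key, Finset.sum_sigma]
  simp [Finset.mul_sum]

lemma hsym_zero (n : ℕ) (x : Fin n → ℝ) : hsym n 0 x = 1 := by
  simp [hsym, Finset.Nat.antidiagonalTuple_zero_right]

lemma hsym_zero_vars (k : ℕ) (x : Fin 0 → ℝ) : hsym 0 (k+1) x = 0 := by
  simp [hsym, Finset.Nat.antidiagonalTuple_zero_succ]

lemma ones_cons (n : ℕ) :
    (fun _ : Fin (n+1) => (1:ℝ)) = Fin.cons 1 (fun _ : Fin n => (1:ℝ)) := by
  funext i
  refine Fin.cases ?_ (fun j => ?_) i <;> simp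

lemma hsym_ones_one (n : ℕ) : hsym n 1 (fun _ => 1) = n := by
  induction n with
  | zero => simp [hsym_zero_vars]
  | succ m ih =>
    rw [ones_cons, hsym_cons, Finset.Nat.sum_antidiagonal_eq_sum_range_succ_mk]
    simp [Finset.sum_range_succ, ih, hsym_zero]
    try push_cast
    try ring

lemma hsym_ones_two (n : ℕ) : hsym n 2 (fun _ => 1) = n * (n+1) / 2 := by
  induction n with
  | zero => simp [hsym_zero_vars]
  | succ m ih =>
    rw [ones_cons, hsym_cons, Finset.Nat.sum_antidiagonal_eq_sum_range_succ_mk]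
    simp [Finset.sum_range_succ, ih, hsym_zero, hsym_ones_one]
    try push_cast
    try ring

lemma hsym_ones_three (n : ℕ) : hsym n 3 (fun _ => 1) = n * (n+1) * (n+2) / 6 := by
  induction n with
  | zero => simp [hsym_zero_vars]
  | succ m ih =>
    rw [ones_cons, hsym_cons, Finset.Nat.sum_antidiagonal_eq_sum_range_succ_mk]
    simp [Finset.sum_range_succ, ih, hsym_zero, hsym_ones_one, hsym_ones_two]
    push_cast
    ring

lemma point_cons (m : ℕ) :
    (fun i : Fin (m+1) => if (i : ℕ) = 0 then (2:ℝ) else 1)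
      = Fin.cons 2 (fun _ : Fin m => (1:ℝ)) := by
  funext i
  refine Fin.cases ?_ (fun j => ?_) i <;> simp

lemma hsym_point_one (m : ℕ) :
    hsym (m+1) 1 (fun i => if (i : ℕ) = 0 then 2 else 1) = (m:ℝ) + 2 := by
  rw [point_cons, hsym_cons, Finset.Nat.sum_antidiagonal_eq_sum_range_succ_mk]
  simp [Finset.sum_range_succ, hsym_zero, hsym_ones_one]
  try ring

lemma hsym_point_two (m : ℕ) :
    hsym (m+1) 2 (fun i => if (i : ℕ) = 0 then 2 else 1)
      = (m:ℝ) * (m+1) / 2 + 2 * m + 4 := by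
  rw [point_cons, hsym_cons, Finset.Nat.sum_antidiagonal_eq_sum_range_succ_mk]
  simp [Finset.sum_range_succ, hsym_zero, hsym_ones_one, hsym_ones_two]
  try ring

lemma hsym_point_three (m : ℕ) :
    hsym (m+1) 3 (fun i => if (i : ℕ) = 0 then 2 else 1)
      = (m:ℝ) * (m+1) * (m+2) / 6 + 2 * ((m:ℝ) * (m+1) / 2) + 4 * m + 8 := by
  rw [point_cons, hsym_cons, Finset.Nat.sum_antidiagonal_eq_sum_range_succ_mk]
  simp [Finset.sum_range_succ, hsym_zero, hsym_ones_one, hsym_ones_two,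
    hsym_ones_three]
  try ring

lemma cast_choose_two (n : ℕ) : (((n+1).choose 2 : ℕ) : ℝ) = (n+1) * n / 2 := by
  induction n with
  | zero => simp
  | succ m ih =>
    rw [show m + 1 + 1 = (m + 1) + 1 from rfl, Nat.choose_succ_succ (m+1) 1]
    push_cast [ih, Nat.choose_one_right]
    ring

lemma cast_choose_three (n : ℕ) :
    (((n+2).choose 3 : ℕ) : ℝ) = (n+2) * (n+1) * n / 6 := by
  induction n with
  | zero => simp
  | succ m ih =>
    rw [show m + 1 + 2 = (m + 2) + 1 from rfl, Nat.choose_succ_succ (m+2) 2]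
    push_cast [ih, cast_choose_two (m+1)]
    ring

/-- For every `n ≥ 3`, the inequality `H_{n,(2,2,2)} ≥ H_{n,(3,1,1,1)}` fails at the
point `(2,1,…,1)`: there `h_{n,2}^3/C(n+1,2)^3 < h_{n,3}·h_{n,1}^3/(C(n+2,3)·n^3)`. -/
theorem H222_lt_H3111_at_counterexample_point (n : ℕ) (hn : 3 ≤ n) :
    (hsym n 2 (fun i => if (i : ℕ) = 0 then 2 else 1)) ^ 3 /
        (((n + 1).choose 2 : ℝ)) ^ 3 <
      hsym n 3 (fun i => if (i : ℕ) = 0 then 2 else 1) *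
          (hsym n 1 (fun i => if (i : ℕ) = 0 then 2 else 1)) ^ 3 /
        (((n + 2).choose 3 : ℝ) * (n : ℝ) ^ 3) := by
  obtain ⟨m, rfl⟩ : ∃ m, n = m + 1 := ⟨n - 1, by omega⟩
  have hm : 2 ≤ m := by omega
  have hN : (2:ℝ) ≤ (m:ℝ) := by exact_mod_cast hm
  set N : ℝ := (m:ℝ) with hNdef
  rw [hsym_point_one, hsym_point_two, hsym_point_three,
    show m + 1 + 1 = (m + 1) + 1 from rfl, cast_choose_two (m+1),
    show m + 1 + 2 = (m + 1) + 2 from rfl, cast_choose_three (m+1)]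
  push_cast
  have hb : (0:ℝ) < ((N + 1 + 1) * (N + 1) / 2) ^ 3 := by
    have : (0:ℝ) < (N + 1 + 1) * (N + 1) / 2 := by nlinarith
    exact pow_pos this 3
  have hd : (0:ℝ) < (N + 1 + 2) * (N + 1 + 1) * (N + 1) / 6 * (N + 1) ^ 3 := by
    have h1 : (0:ℝ) < (N + 1 + 2) * (N + 1 + 1) * (N + 1) / 6 := by
      have a1 : (0:ℝ) < N + 1 := by linarith
      have a2 : (0:ℝ) < N + 1 + 1 := by linarith
      have a3 : (0:ℝ) < N + 1 + 2 := by linarith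
      have := mul_pos (mul_pos a3 a2) a1
      linarith
    have h2 : (0:ℝ) < (N + 1) ^ 3 := by positivity
    exact mul_pos h1 h2
  rw [div_lt_div_iff₀ hb hd]
  nlinarith [pow_nonneg (by linarith : (0:ℝ) ≤ N - 2) 5,
    pow_nonneg (by linarith : (0:ℝ) ≤ N - 2) 4,
    pow_nonneg (by linarith : (0:ℝ) ≤ N - 2) 3,
    sq_nonneg (N - 2), hN]
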